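/- arXiv:2202.08544 — 2 statements merged into one kernel-verified Lean document; each statement's English description precedes it below -/
import Mathlib

section
/- Let Π = (Δ, Σ, 𝒱, ℰ) be an LCL problem for Δ-regular unrooted trees, let 𝒮 ⊆ 𝒱, let C ∈ 𝒮, and let 1 ≤ i ≤ j be integers. If there exists a correct half-edge labeling of T_j* in which the node configuration of the root is C and the node configuration of every other degree-Δ node lies in 𝒮, then such a labeling also exists for T_i*. Equivalently, if no such labeling of T_i* exists, then no such labeling of T_j* exists for any j ≥ i. -/
/-- `lclCompat 𝒮 ℰ i τ` : there is a correct half-edge labeling of a copy of the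
rooted tree `T_i` hanging below an edge whose half-edge on the `T_i` side is
labeled `τ`, such that the node configuration of every degree-`Δ` node of this
subtree lies in `𝒮` and every edge configuration lies in `ℰ`. -/
def lclCompat {L : Type} [DecidableEq L] (S E : Set (Multiset L)) : ℕ → L → Prop
  | 0, _ => True
  | i + 1, τ => ∃ C ∈ S, τ ∈ C ∧
      ∀ β ∈ C.erase τ, ∃ τ', ({β, τ'} : Multiset L) ∈ E ∧ lclCompat S E i τ'

/-- For `i ≥ 1`: there exists a correct half-edge labeling of `T_i*` in which the
node configuration of the root is `C` and the node configuration of every other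
degree-`Δ` node lies in `𝒮` (edge configurations lie in `ℰ`). -/
def lclTreeOk {L : Type} [DecidableEq L] (S E : Set (Multiset L)) (i : ℕ)
    (C : Multiset L) : Prop :=
  ∀ β ∈ C, ∃ τ, ({β, τ} : Multiset L) ∈ E ∧ lclCompat S E (i - 1) τ

/-- `trim 𝒮`: configurations `C ∈ 𝒮` such that for every `i ≥ 1` there is a correct
half-edge labeling of `T_i*` with root configuration `C` and all other degree-`Δ`
node configurations in `𝒮`. -/
def lclTrim {L : Type} [DecidableEq L] (S E : Set (Multiset L)) : Set (Multiset L) :=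
  {C | C ∈ S ∧ ∀ i : ℕ, 1 ≤ i → lclTreeOk S E i C}


lemma lclCompat_succ_mono {L : Type} [DecidableEq L] (S E : Set (Multiset L)) :
    ∀ n τ, lclCompat S E (n + 1) τ → lclCompat S E n τ := by
  intro n
  induction n with
  | zero => intro τ _; trivial
  | succ m ih =>
    intro τ h
    obtain ⟨C, hCS, hτ, hrest⟩ := h
    exact ⟨C, hCS, hτ, fun β hβ => by
      obtain ⟨τ', hE', hc⟩ := hrest β hβ
      exact ⟨τ', hE', ih τ' hc⟩⟩

lemma lclCompat_mono {L : Type} [DecidableEq L] (S E : Set (Multiset L))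
    {m n : ℕ} (h : m ≤ n) : ∀ τ, lclCompat S E n τ → lclCompat S E m τ := by
  induction h with
  | refl => exact fun _ h => h
  | step _ ih => exact fun τ h => ih τ (lclCompat_succ_mono S E _ τ h)

/-- Monotonicity of labelability of `T_i*` in the height. -/
theorem stmt1 {L : Type} [Fintype L] [DecidableEq L]
    (Δ : ℕ) (hΔ : 1 ≤ Δ) (V E : Set (Multiset L))
    (hV : ∀ C ∈ V, Multiset.card C = Δ)
    (hE : ∀ D ∈ E, Multiset.card D = 2)
    (S : Set (Multiset L)) (hS : S ⊆ V)
    (C : Multiset L) (hC : C ∈ S)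
    (i j : ℕ) (hi : 1 ≤ i) (hij : i ≤ j)
    (h : lclTreeOk S E j C) : lclTreeOk S E i C := by
  intro β hβ
  obtain ⟨τ, hE', hc⟩ := h β hβ
  exact ⟨τ, hE', lclCompat_mono S E (Nat.sub_le_sub_right hij 1) τ hc⟩
end

section
/- Let Π = (Δ, Σ, 𝒱, ℰ) be an LCL problem for Δ-regular unrooted trees. Then there exists a positive integer γ with the following property: for every subset 𝒮 ⊆ 𝒱 and every node configuration C ∈ 𝒮 \ trim(𝒮), there is no correct half-edge labeling of T_γ* in which the node configuration of the root is C and the node configuration of every other degree-Δ node lies in 𝒮. -/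
section Aux

variable {L : Type} [DecidableEq L] (S E : Set (Multiset L))

lemma lclCompat_succ_imp : ∀ i (τ : L), lclCompat S E (i + 1) τ → lclCompat S E i τ := by
  intro i
  induction i with
  | zero => intro τ _; trivial
  | succ n ih =>
    rintro τ ⟨C, hC, hτ, h⟩
    refine ⟨C, hC, hτ, fun β hβ => ?_⟩
    obtain ⟨τ', hE', hc⟩ := h β hβ
    exact ⟨τ', hE', ih τ' hc⟩

lemma lclCompat_mono_s2 {i j : ℕ} (hij : i ≤ j) (τ : L) :
    lclCompat S E j τ → lclCompat S E i τ := by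
  induction j with
  | zero =>
    intro h
    have : i = 0 := Nat.le_zero.mp hij
    simpa [this] using h
  | succ n ih =>
    intro h
    rcases Nat.lt_or_ge i (n + 1) with hlt | hge
    · exact ih (by omega) (lclCompat_succ_imp S E n τ h)
    · have : i = n + 1 := by omega
      exact this ▸ h

lemma lclCompat_congr_succ {i j : ℕ}
    (h : ∀ τ : L, lclCompat S E i τ ↔ lclCompat S E j τ) :
    ∀ τ : L, lclCompat S E (i + 1) τ ↔ lclCompat S E (j + 1) τ := by
  intro τ
  constructor
  · rintro ⟨C, hC, hτ, hb⟩
    refine ⟨C, hC, hτ, fun β hβ => ?_⟩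
    obtain ⟨τ', h1, h2⟩ := hb β hβ
    exact ⟨τ', h1, (h τ').mp h2⟩
  · rintro ⟨C, hC, hτ, hb⟩
    refine ⟨C, hC, hτ, fun β hβ => ?_⟩
    obtain ⟨τ', h1, h2⟩ := hb β hβ
    exact ⟨τ', h1, (h τ').mpr h2⟩

end Aux

/-- A uniform witness height `γ` for non-membership in `trim`. -/
theorem stmt2 {L : Type} [Fintype L] [DecidableEq L]
    (Δ : ℕ) (hΔ : 1 ≤ Δ) (V E : Set (Multiset L))
    (hV : ∀ C ∈ V, Multiset.card C = Δ)
    (hE : ∀ D ∈ E, Multiset.card D = 2) :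
    ∃ γ : ℕ, 1 ≤ γ ∧ ∀ S : Set (Multiset L), S ⊆ V →
      ∀ C ∈ S, C ∉ lclTrim S E → ¬ lclTreeOk S E γ C := by
  classical
  set N := Fintype.card L with hN
  refine ⟨N + 1, by omega, ?_⟩
  intro S _hS C hCS hCtrim hOk
  -- The chain of compat sets stabilizes by step N.
  set A : ℕ → Finset L := fun i => Finset.univ.filter (fun τ => lclCompat S E i τ) with hA
  have hAmem : ∀ i τ, τ ∈ A i ↔ lclCompat S E i τ := by
    intro i τ; simp [hA]
  have hAanti : ∀ i, A (i + 1) ⊆ A i := by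
    intro i τ hτ
    exact (hAmem i τ).mpr (lclCompat_succ_imp S E i τ ((hAmem (i+1) τ).mp hτ))
  -- exists m ≤ N with A m = A (m+1)
  have hstab : ∃ m ≤ N, A m = A (m + 1) := by
    by_contra hcon
    push_neg at hcon
    have hlt : ∀ m ≤ N, (A (m + 1)).card < (A m).card := by
      intro m hm
      exact Finset.card_lt_card (Finset.ssubset_iff_subset_ne.mpr ⟨hAanti m, (hcon m hm).symm⟩)
    have key : ∀ k, k ≤ N + 1 → (A k).card + k ≤ (A 0).card := by
      intro k
      induction k with
      | zero => simp
      | succ n ih =>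
        intro hk
        have := hlt n (by omega)
        have := ih (by omega)
        omega
    have h1 := key (N + 1) le_rfl
    have h2 : (A 0).card ≤ N := by
      simpa [hN] using Finset.card_le_univ (A 0)
    omega
  obtain ⟨m, hmN, hAm⟩ := hstab
  -- A stabilizes from m on
  have hiff : ∀ j, m ≤ j → ∀ τ : L, lclCompat S E j τ ↔ lclCompat S E m τ := by
    intro j hj
    induction j with
    | zero =>
      intro τ
      have : m = 0 := Nat.le_zero.mp hj
      simp [this]
    | succ n ih =>
      rcases Nat.lt_or_ge m (n + 1) with hlt | hge
      · have hiffn := ih (by omega)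
        have h1 : ∀ τ : L, lclCompat S E (m + 1) τ ↔ lclCompat S E m τ := by
          intro τ
          constructor
          · exact lclCompat_succ_imp S E m τ
          · intro h
            have : τ ∈ A (m + 1) := hAm ▸ (hAmem m τ).mpr h
            exact (hAmem (m + 1) τ).mp this
        intro τ
        calc lclCompat S E (n + 1) τ ↔ lclCompat S E (m + 1) τ :=
              lclCompat_congr_succ S E hiffn τ
          _ ↔ lclCompat S E m τ := h1 τ
      · have : m = n + 1 := by omega
        intro τ; simp [this]
  -- lclCompat N τ → lclCompat j τ for all j
  have hall : ∀ τ : L, lclCompat S E N τ → ∀ j, lclCompat S E j τ := by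
    intro τ hτ j
    rcases le_or_gt j N with hj | hj
    · exact lclCompat_mono_s2 S E hj τ hτ
    · have hm : lclCompat S E m τ := lclCompat_mono_s2 S E hmN τ hτ
      exact (hiff j (by omega) τ).mpr hm
  -- conclude C ∈ lclTrim, contradiction
  apply hCtrim
  refine ⟨hCS, fun i _hi β hβ => ?_⟩
  obtain ⟨τ, hτE, hτc⟩ := hOk β hβ
  have : lclCompat S E N τ := by simpa using hτc
  exact ⟨τ, hτE, hall τ this (i - 1)⟩
end
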